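/- arXiv:2010.14155 — 2 statements merged into one kernel-verified Lean document; each statement's English description precedes it below -/
import Mathlib

section
/- Let k ≥ 1, let G be a finite connected simple graph that is (P3+kP2)-free and contains a vertex set A inducing P3+(k-1)P2. If there exist two regular vertices of G at distance exactly three from one another, then G has a minimum dominating set which is not a stable set (i.e., a minimum dominating set containing two adjacent vertices). -/
open SimpleGraph

/-- The disjoint union of a path `P₃` and `k` copies of `P₂`. -/
def P3kP2 (k : ℕ) : SimpleGraph (Fin 3 ⊕ Fin k × Fin 2) :=
  SimpleGraph.fromRel fun x y =>
    match x, y with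
    | Sum.inl a, Sum.inl b => (b : ℕ) = (a : ℕ) + 1
    | Sum.inr a, Sum.inr b => a.1 = b.1 ∧ a.2 ≠ b.2
    | _, _ => False

/-- `G` contains no induced subgraph isomorphic to `H`. -/
def HFree {V W : Type*} (G : SimpleGraph V) (H : SimpleGraph W) : Prop :=
  IsEmpty (H ↪g G)

/-- `D` is a dominating set of `G`. -/
def IsDomSet {V : Type*} (G : SimpleGraph V) (D : Set V) : Prop :=
  ∀ v ∉ D, ∃ u ∈ D, G.Adj u v

/-- `D` is a minimum dominating set of `G`. -/
def IsMinDomSet {V : Type*} (G : SimpleGraph V) (D : Set V) : Prop :=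
  IsDomSet G D ∧ ∀ D' : Set V, IsDomSet G D' → D.ncard ≤ D'.ncard

/-- The distance from a vertex `v` to a set `A` of vertices. -/
noncomputable def distToSet {V : Type*} (G : SimpleGraph V) (v : V) (A : Set V) : ℕ :=
  sInf ((G.dist v) '' A)

/-- The set of vertices at distance two from `A` whose open neighbourhood is a clique. -/
def cliqueDistTwo {V : Type*} (G : SimpleGraph V) (A : Set V) : Set V :=
  {v | distToSet G v A = 2 ∧ G.IsClique (G.neighborSet v)}

/-- A vertex `c₁` is regular (w.r.t. `A` and `k`) if `c₁ ∈ 𝒞` and there are `k` further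
vertices of `𝒞` such that all `k+1` of them are pairwise at distance at least four. -/
def IsRegularVertex {V : Type*} (G : SimpleGraph V) (k : ℕ) (A : Set V) (c₁ : V) : Prop :=
  c₁ ∈ cliqueDistTwo G A ∧ ∃ c : Fin k → V, (∀ i, c i ∈ cliqueDistTwo G A) ∧
    (∀ i, 4 ≤ G.dist c₁ (c i)) ∧ ∀ i j, i ≠ j → 4 ≤ G.dist (c i) (c j)

/-- `v` is a private neighbour of `u` with respect to the dominating set `D`:
`N[v] ∩ D = {u}`. -/
def IsPrivateNbr {V : Type*} (G : SimpleGraph V) (D : Set V) (u v : V) : Prop :=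
  (insert v (G.neighborSet v)) ∩ D = {u}

/-- A stable (independent) set of vertices. -/
def IsStable {V : Type*} (G : SimpleGraph V) (S : Set V) : Prop :=
  S.Pairwise fun u v => ¬ G.Adj u v


lemma P3kP2_adj_inl_inl {k : ℕ} (a b : Fin 3) :
    (P3kP2 k).Adj (Sum.inl a) (Sum.inl b) ↔ ((b : ℕ) = a + 1 ∨ (a : ℕ) = b + 1) := by
  simp only [P3kP2, fromRel_adj, ne_eq, Sum.inl.injEq]
  constructor
  · rintro ⟨-, h⟩; exact h
  · rintro (h | h)
    · exact ⟨fun he => by subst he; omega, Or.inl h⟩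
    · exact ⟨fun he => by subst he; omega, Or.inr h⟩

lemma P3kP2_adj_inl_inr {k : ℕ} (a : Fin 3) (p : Fin k × Fin 2) :
    ¬ (P3kP2 k).Adj (Sum.inl a) (Sum.inr p) := by
  simp [P3kP2, fromRel_adj]

lemma P3kP2_adj_inr_inl {k : ℕ} (a : Fin 3) (p : Fin k × Fin 2) :
    ¬ (P3kP2 k).Adj (Sum.inr p) (Sum.inl a) := by
  simp [P3kP2, fromRel_adj]

lemma P3kP2_adj_inr_inr {k : ℕ} (p q : Fin k × Fin 2) :
    (P3kP2 k).Adj (Sum.inr p) (Sum.inr q) ↔ (p.1 = q.1 ∧ p.2 ≠ q.2) := by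
  simp only [P3kP2, fromRel_adj, ne_eq, Sum.inr.injEq]
  constructor
  · rintro ⟨hne, (⟨h1, h2⟩ | ⟨h1, h2⟩)⟩
    · exact ⟨h1, h2⟩
    · exact ⟨h1.symm, fun he => h2 he.symm⟩
  · rintro ⟨h1, h2⟩
    exact ⟨fun he => h2 (congrArg Prod.snd he), Or.inl ⟨h1, h2⟩⟩

section
variable {V : Type*} [Fintype V] {G : SimpleGraph V} {k : ℕ}

def Far2 (G : SimpleGraph V) (x y : V) : Prop := ¬ G.Adj x y ∧ x ≠ y

lemma Far2.symm {x y : V} (h : Far2 G x y) : Far2 G y x :=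
  ⟨fun ha => h.1 ha.symm, h.2.symm⟩

lemma fin2cases (t : Fin 2) : t = 0 ∨ t = 1 := by omega

lemma config_contra {k : ℕ} (hfree : HFree G (P3kP2 k)) (p₀ p₁ p₂ : V) (u w : Fin k → V)
    (h01 : G.Adj p₀ p₁) (h12 : G.Adj p₁ p₂) (h02 : Far2 G p₀ p₂)
    (hp : ∀ i, G.Adj (u i) (w i))
    (hcross : ∀ i z, z = p₀ ∨ z = p₁ ∨ z = p₂ → Far2 G z (u i) ∧ Far2 G z (w i))
    (hpair : ∀ i j, i ≠ j → Far2 G (u i) (u j) ∧ Far2 G (u i) (w j) ∧ Far2 G (w i) (w j)) :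
    False := by
  set q : Fin 3 → V := fun a => if a.val = 0 then p₀ else if a.val = 1 then p₁ else p₂ with hq
  set P : Fin 3 ⊕ Fin k × Fin 2 → V :=
    Sum.elim q (fun z => if z.2 = 0 then u z.1 else w z.1) with hP
  have hPl : ∀ a : Fin 3, P (Sum.inl a) = q a := fun _ => rfl
  have hPu : ∀ i : Fin k, P (Sum.inr (i, 0)) = u i := by intro i; simp [hP]
  have hPw : ∀ i : Fin k, P (Sum.inr (i, 1)) = w i := by intro i; simp [hP]
  have hqv : ∀ a : Fin 3, q a = p₀ ∨ q a = p₁ ∨ q a = p₂ := by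
    intro a; rw [hq]; by_cases h0 : a.val = 0 <;> by_cases h1 : a.val = 1 <;> simp [h0, h1]
  have hcross' : ∀ (i : Fin k) (a : Fin 3) (t : Fin 2),
      Far2 G (P (Sum.inl a)) (P (Sum.inr (i, t))) := by
    intro i a t
    have h := hcross i (q a) (hqv a)
    rcases fin2cases t with rfl | rfl
    · rw [hPl, hPu]; exact h.1
    · rw [hPl, hPw]; exact h.2
  have key2 : ∀ x y, (P3kP2 k).Adj x y → G.Adj (P x) (P y) := by
    rintro (a | ⟨i, s⟩) (b | ⟨j, t⟩) hadj
    · rw [P3kP2_adj_inl_inl] at hadj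
      rw [hPl, hPl]
      have ha := a.isLt; have hb := b.isLt
      have hv : (a.val = 0 ∧ b.val = 1) ∨ (a.val = 1 ∧ b.val = 0) ∨
          (a.val = 1 ∧ b.val = 2) ∨ (a.val = 2 ∧ b.val = 1) := by omega
      rw [hq]
      rcases hv with ⟨h1, h2⟩ | ⟨h1, h2⟩ | ⟨h1, h2⟩ | ⟨h1, h2⟩ <;> simp only [h1, h2] <;> norm_num
      · exact h01
      · exact h01.symm
      · exact h12
      · exact h12.symm
    · exact absurd hadj (P3kP2_adj_inl_inr _ _)
    · exact absurd hadj (P3kP2_adj_inr_inl _ _)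
    · rw [P3kP2_adj_inr_inr] at hadj
      obtain ⟨h1, h2⟩ := hadj
      obtain rfl : i = j := h1
      rcases fin2cases s with rfl | rfl <;> rcases fin2cases t with rfl | rfl
      · exact absurd rfl h2
      · rw [hPu, hPw]; exact hp i
      · rw [hPw, hPu]; exact (hp i).symm
      · exact absurd rfl h2
  have key1 : ∀ x y, x ≠ y → ¬ (P3kP2 k).Adj x y → ¬ G.Adj (P x) (P y) ∧ P x ≠ P y := by
    rintro (a | ⟨i, s⟩) (b | ⟨j, t⟩) hne hadj
    · rw [P3kP2_adj_inl_inl] at hadj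
      have hab : a.val ≠ b.val := fun h => hne (by rw [Fin.ext h])
      have ha := a.isLt; have hb := b.isLt
      have hv : (a.val = 0 ∧ b.val = 2) ∨ (a.val = 2 ∧ b.val = 0) := by omega
      rw [hPl, hPl, hq]
      rcases hv with ⟨h1, h2⟩ | ⟨h1, h2⟩ <;> simp only [h1, h2] <;> norm_num
      · exact ⟨h02.1, h02.2⟩
      · exact ⟨fun h => h02.1 h.symm, h02.2.symm⟩
    · exact ⟨(hcross' j a t).1, (hcross' j a t).2⟩
    · exact ⟨(hcross' i b s).symm.1, (hcross' i b s).symm.2⟩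
    · by_cases hij : i = j
      · subst hij
        have hst : s ≠ t := by
          intro h; exact hne (by rw [h])
        exact absurd ((P3kP2_adj_inr_inr (k := k) (i, s) (i, t)).mpr ⟨rfl, hst⟩) hadj
      · have h3 := hpair i j hij
        have h4 := hpair j i (Ne.symm hij)
        rcases fin2cases s with rfl | rfl <;> rcases fin2cases t with rfl | rfl
        · rw [hPu, hPu]; exact ⟨(h3.1).1, (h3.1).2⟩
        · rw [hPu, hPw]; exact ⟨(h3.2.1).1, (h3.2.1).2⟩
        · rw [hPw, hPu]; exact ⟨(h4.2.1).symm.1, (h4.2.1).symm.2⟩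
        · rw [hPw, hPw]; exact ⟨(h3.2.2).1, (h3.2.2).2⟩
  refine (show IsEmpty (P3kP2 k ↪g G) from hfree).false ⟨⟨P, ?_⟩, ?_⟩
  · intro x y hxy
    by_contra hne
    by_cases hadj : (P3kP2 k).Adj x y
    · have := key2 x y hadj
      rw [hxy] at this
      exact G.irrefl this
    · exact (key1 x y hne hadj).2 hxy
  · intro x y
    constructor
    · intro hG
      by_contra hadj
      by_cases hxy : x = y
      · subst hxy; exact G.irrefl hG
      · exact (key1 x y hxy hadj).1 hG
    · exact key2 x y


lemma adj_dist_le {x y : V} (h : G.Adj x y) : G.dist x y ≤ 1 := by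
  have := SimpleGraph.dist_le (SimpleGraph.Walk.cons h SimpleGraph.Walk.nil)
  simpa using this

lemma far2_of_dist {x y : V} (h : 2 ≤ G.dist x y) : Far2 G x y := by
  constructor
  · intro ha; have := adj_dist_le ha; omega
  · rintro rfl; rw [SimpleGraph.dist_self] at h; omega

lemma exists_mid2 (hconn : G.Connected) {x y : V} (h : G.dist x y = 2) :
    ∃ m, G.Adj x m ∧ G.Adj m y := by
  obtain ⟨p, hp⟩ := hconn.exists_walk_length_eq_dist x y
  rw [h] at hp
  cases p with
  | nil => simp at hp
  | cons h1 p' => cases p' with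
    | nil => simp at hp
    | cons h2 p'' => cases p'' with
      | nil => exact ⟨_, h1, h2⟩
      | cons h3 p3 => simp [SimpleGraph.Walk.length_cons] at hp

lemma exists_mid3 (hconn : G.Connected) {x y : V} (h : G.dist x y = 3) :
    ∃ a b, G.Adj x a ∧ G.Adj a b ∧ G.Adj b y := by
  obtain ⟨p, hp⟩ := hconn.exists_walk_length_eq_dist x y
  rw [h] at hp
  cases p with
  | nil => simp at hp
  | cons h1 p' => cases p' with
    | nil => simp at hp
    | cons h2 p'' => cases p'' with
      | nil => simp at hp
      | cons h3 p3 => cases p3 with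
        | nil => exact ⟨_, _, h1, h2, h3⟩
        | cons h4 p4 => simp [SimpleGraph.Walk.length_cons] at hp

/-- Saturation lemma: if `c` has a family of `k` vertices pairwise at distance ≥ 4 and
at distance ≥ 4 from `c`, then any vertex at distance 2 from `c` is adjacent to the
whole open neighbourhood of one of the family members. -/
lemma star_lemma {k : ℕ} (hconn : G.Connected) (hfree : HFree G (P3kP2 k))
    {c t : V} (a : Fin k → V)
    (h4 : ∀ i, 4 ≤ G.dist c (a i)) (hpw : ∀ i j, i ≠ j → 4 ≤ G.dist (a i) (a j))
    (hct : G.dist c t = 2) : ∃ i, ∀ z, G.Adj (a i) z → G.Adj t z := by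
  by_contra hno
  push_neg at hno
  choose v hv1 hv2 using hno
  obtain ⟨m, hcm, hmt⟩ := exists_mid2 hconn hct
  have tri : ∀ x y z : V, G.dist x z ≤ G.dist x y + G.dist y z := fun x y z =>
    hconn.dist_triangle
  have hdc : ∀ x y : V, G.dist x y = G.dist y x := fun x y => SimpleGraph.dist_comm
  -- distances from c, m, t to the family and their chosen neighbours
  have hdcv : ∀ i, 3 ≤ G.dist c (v i) := by
    intro i
    have t1 := tri c (v i) (a i)
    have t2 := adj_dist_le (hv1 i).symm
    have := h4 i
    omega
  have hdma : ∀ i, 3 ≤ G.dist m (a i) := by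
    intro i
    have t1 := tri c m (a i)
    have t2 := adj_dist_le hcm
    have := h4 i
    omega
  have hdmv : ∀ i, 2 ≤ G.dist m (v i) := by
    intro i
    have t1 := tri m (v i) (a i)
    have t2 := adj_dist_le (hv1 i).symm
    have := hdma i
    omega
  have hdta : ∀ i, 2 ≤ G.dist t (a i) := by
    intro i
    have t1 := tri c t (a i)
    have := h4 i
    omega
  apply config_contra hfree c m t a v (hcm) (hmt) (far2_of_dist (by omega)) hv1
  · rintro i z (rfl | rfl | rfl)
    · refine ⟨far2_of_dist (by have := h4 i; omega), far2_of_dist (by have := hdcv i; omega)⟩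
    · refine ⟨far2_of_dist (by have := hdma i; omega), far2_of_dist (by have := hdmv i; omega)⟩
    · refine ⟨far2_of_dist (hdta i), ⟨hv2 i, ?_⟩⟩
      rintro rfl
      have t1 := adj_dist_le (hv1 i).symm
      have t2 := hdta i
      omega
  · intro i j hij
    refine ⟨far2_of_dist (by have := hpw i j hij; omega), far2_of_dist ?_, far2_of_dist ?_⟩
    · have t1 := tri (a i) (v j) (a j)
      have t2 := adj_dist_le (hv1 j).symm
      have t3 := hdc (v j) (a j)
      have := hpw i j hij
      omega
    · have t1 := tri (a i) (v i) (a j)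
      have t2 := tri (v i) (v j) (a j)
      have t3 := adj_dist_le (hv1 i)
      have t4 := adj_dist_le (hv1 j).symm
      have := hpw i j hij
      omega


lemma pairA {k : ℕ} (hk : 1 ≤ k) (hfree : HFree G (P3kP2 k)) (f : P3kP2 (k-1) ↪g G)
    {x y : V} (hxy : G.Adj x y)
    (hx : ∀ s, Far2 G (f s) x) (hy : ∀ s, Far2 G (f s) y) : False := by
  obtain ⟨m, rfl⟩ : ∃ m, k = m + 1 := ⟨k - 1, (Nat.succ_pred_eq_of_pos hk).symm⟩
  set U : Fin (m+1) → V :=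
    fun i => if h : (i : ℕ) < m then f (Sum.inr (⟨i, h⟩, 0)) else x with hU
  set W : Fin (m+1) → V :=
    fun i => if h : (i : ℕ) < m then f (Sum.inr (⟨i, h⟩, 1)) else y with hW
  have fdiff : ∀ s s' , s ≠ s' → f s ≠ f s' := fun s s' h => fun he => h (f.injective he)
  have fnadj : ∀ s s', ¬ (P3kP2 m).Adj s s' → ¬ G.Adj (f s) (f s') := by
    intro s s' h ha
    exact h (f.map_rel_iff.mp ha)
  apply config_contra hfree (f (Sum.inl 0)) (f (Sum.inl 1)) (f (Sum.inl 2)) U W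
  · exact f.map_rel_iff.mpr ((P3kP2_adj_inl_inl 0 1).mpr (by decide))
  · exact f.map_rel_iff.mpr ((P3kP2_adj_inl_inl 1 2).mpr (by decide))
  · constructor
    · apply fnadj
      rw [P3kP2_adj_inl_inl]
      decide
    · exact fdiff _ _ (by simp)
  · intro i
    by_cases h : (i : ℕ) < m
    · simp only [hU, hW, dif_pos h]
      exact f.map_rel_iff.mpr ((P3kP2_adj_inr_inr _ _).mpr ⟨rfl, by simp⟩)
    · simp only [hU, hW, dif_neg h]
      exact hxy
  · intro i z hz
    have hza : ∃ a : Fin 3, z = f (Sum.inl a) := by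
      rcases hz with rfl | rfl | rfl
      exacts [⟨0, rfl⟩, ⟨1, rfl⟩, ⟨2, rfl⟩]
    obtain ⟨a, rfl⟩ := hza
    by_cases h : (i : ℕ) < m
    · simp only [hU, hW, dif_pos h]
      refine ⟨⟨fnadj _ _ (P3kP2_adj_inl_inr _ _), fdiff _ _ (by simp)⟩,
        ⟨fnadj _ _ (P3kP2_adj_inl_inr _ _), fdiff _ _ (by simp)⟩⟩
    · simp only [hU, hW, dif_neg h]
      exact ⟨hx (Sum.inl a), hy (Sum.inl a)⟩
  · intro i j hij
    by_cases h1 : (i : ℕ) < m <;> by_cases h2 : (j : ℕ) < m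
    · have hvne : (i : ℕ) ≠ (j : ℕ) := fun h => hij (Fin.ext h)
      have hne1 : ∀ (s t : Fin 2), (Sum.inr ((⟨i, h1⟩ : Fin m), s) :
          Fin 3 ⊕ Fin m × Fin 2) ≠ Sum.inr ((⟨j, h2⟩ : Fin m), t) := by
        intro s t hh
        apply hvne
        have := (Sum.inr.injEq _ _).mp hh
        have h3 := congrArg Prod.fst this
        simpa using congrArg Fin.val h3
      have hnadj1 : ∀ (s t : Fin 2), ¬ (P3kP2 m).Adj (Sum.inr (⟨i, h1⟩, s)) (Sum.inr (⟨j, h2⟩, t)) := by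
        intro s t hh
        rw [P3kP2_adj_inr_inr] at hh
        exact hvne (by simpa using congrArg Fin.val hh.1)
      simp only [hU, hW, dif_pos h1, dif_pos h2]
      exact ⟨⟨fnadj _ _ (hnadj1 0 0), fdiff _ _ (hne1 0 0)⟩,
        ⟨fnadj _ _ (hnadj1 0 1), fdiff _ _ (hne1 0 1)⟩,
        ⟨fnadj _ _ (hnadj1 1 1), fdiff _ _ (hne1 1 1)⟩⟩
    · simp only [hU, hW, dif_pos h1, dif_neg h2]
      exact ⟨hx _, hy _, hy _⟩
    · simp only [hU, hW, dif_neg h1, dif_pos h2]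
      exact ⟨(hx _).symm, (hx _).symm, (hy _).symm⟩
    · exfalso
      apply hij
      have := i.isLt; have := j.isLt
      exact Fin.ext (by omega)


lemma cdt_facts (f : P3kP2 (k-1) ↪g G) {v : V}
    (hv : v ∈ cliqueDistTwo G (Set.range f)) :
    (∀ s, 2 ≤ G.dist v (f s)) ∧ (∃ s, G.dist v (f s) = 2) := by
  obtain ⟨hd, -⟩ := hv
  unfold distToSet at hd
  have himg : (G.dist v) '' (Set.range f) = Set.range (fun s => G.dist v (f s)) := by
    rw [← Set.range_comp]; rfl
  rw [himg] at hd
  constructor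
  · intro s
    have hmem : G.dist v (f s) ∈ Set.range (fun s => G.dist v (f s)) := ⟨s, rfl⟩
    have := Nat.sInf_le hmem
    omega
  · have hne : (Set.range fun s => G.dist v (f s)).Nonempty := ⟨_, ⟨Sum.inl 0, rfl⟩⟩
    have := Nat.sInf_mem hne
    rw [hd] at this
    exact this

lemma cdt_nbr_mem_B (hk : 1 ≤ k) (hfree : HFree G (P3kP2 k)) (f : P3kP2 (k-1) ↪g G)
    {v z : V} (hv : v ∈ cliqueDistTwo G (Set.range f)) (hz : G.Adj v z) :
    ∃ s, G.Adj z (f s) := by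
  by_contra hno
  push_neg at hno
  have hvfar : ∀ s, Far2 G (f s) v := fun s => (far2_of_dist ((cdt_facts f hv).1 s)).symm
  have hzfar : ∀ s, Far2 G (f s) z := by
    intro s
    refine ⟨fun h => hno s h.symm, ?_⟩
    rintro rfl
    have h1 := adj_dist_le hz
    have h2 := (cdt_facts f hv).1 s
    omega
  exact pairA hk hfree f hz hvfar hzfar

lemma cdt_not_mem_B (f : P3kP2 (k-1) ↪g G) {v : V}
    (hv : v ∈ cliqueDistTwo G (Set.range f)) : ¬ ∃ s, G.Adj v (f s) := by
  rintro ⟨s, h⟩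
  have h1 := adj_dist_le h
  have h2 := (cdt_facts f hv).1 s
  omega

lemma cdt_not_adj (hk : 1 ≤ k) (hfree : HFree G (P3kP2 k)) (f : P3kP2 (k-1) ↪g G)
    {v w : V} (hv : v ∈ cliqueDistTwo G (Set.range f))
    (hw : w ∈ cliqueDistTwo G (Set.range f)) : ¬ G.Adj v w := fun h =>
  pairA hk hfree f h (fun s => (far2_of_dist ((cdt_facts f hv).1 s)).symm)
    (fun s => (far2_of_dist ((cdt_facts f hw).1 s)).symm)

/-- If `D` is a stable minimum dominating set maximizing the number of vertices adjacent
to `A`, then no vertex of `𝒞` belongs to `D`. -/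
lemma not_mem_maxD (hconn : G.Connected) (hk : 1 ≤ k) (hfree : HFree G (P3kP2 k))
    (f : P3kP2 (k-1) ↪g G) {D : Set V} (hmin : IsMinDomSet G D) (hstab : IsStable G D)
    (hmax : ∀ D', IsMinDomSet G D' →
      (D' ∩ {z | ∃ s, G.Adj z (f s)}).ncard ≤ (D ∩ {z | ∃ s, G.Adj z (f s)}).ncard)
    {c : V} (hc : c ∈ cliqueDistTwo G (Set.range f)) : c ∉ D := by
  intro hcD
  set B : Set V := {z | ∃ s, G.Adj z (f s)} with hB
  obtain ⟨s₀, hs₀⟩ := (cdt_facts f hc).2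
  obtain ⟨u, hcu, -⟩ := exists_mid2 hconn hs₀
  have huB : u ∈ B := cdt_nbr_mem_B hk hfree f hc hcu
  have huD : u ∉ D := fun huD => hstab hcD huD hcu.ne hcu
  set D' := insert u (D \ {c}) with hD'
  have hdom' : IsDomSet G D' := by
    intro t ht
    have htu : t ≠ u := fun h => ht (by rw [h]; exact Set.mem_insert _ _)
    by_cases htD : t ∈ D
    · have htc : t = c := by
        by_contra hne
        exact ht (Set.mem_insert_of_mem _ ⟨htD, hne⟩)
      subst htc
      exact ⟨u, Set.mem_insert _ _, hcu.symm⟩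
    · obtain ⟨d, hdD, hdadj⟩ := hmin.1 t htD
      by_cases hdc : d = c
      · subst hdc
        have h1 : t ∈ G.neighborSet d := hdadj
        have h2 : u ∈ G.neighborSet d := hcu
        exact ⟨u, Set.mem_insert _ _, hc.2 h2 h1 (Ne.symm htu)⟩
      · exact ⟨d, Set.mem_insert_of_mem _ ⟨hdD, hdc⟩, hdadj⟩
  have hcard : D'.ncard = D.ncard := by
    rw [hD', Set.ncard_insert_of_notMem (fun h => huD h.1) (Set.toFinite _),
      Set.ncard_diff_singleton_of_mem hcD]
    have hpos : 0 < D.ncard := (Set.ncard_pos (Set.toFinite D)).mpr ⟨c, hcD⟩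
    omega
  have hmin' : IsMinDomSet G D' := ⟨hdom', fun E hE => by rw [hcard]; exact hmin.2 E hE⟩
  have hcB : c ∉ B := cdt_not_mem_B f hc
  have hDB : D' ∩ B = insert u (D ∩ B) := by
    rw [hD', Set.insert_inter_of_mem huB]
    congr 1
    ext z
    simp only [Set.mem_inter_iff, Set.mem_diff, Set.mem_singleton_iff]
    constructor
    · rintro ⟨⟨h1, h2⟩, h3⟩; exact ⟨h1, h3⟩
    · rintro ⟨h1, h3⟩; exact ⟨⟨h1, fun he => hcB (he ▸ h3)⟩, h3⟩
  have hgt : (D' ∩ B).ncard = (D ∩ B).ncard + 1 := by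
    rw [hDB, Set.ncard_insert_of_notMem (fun h => huD h.1) (Set.toFinite _)]
  have := hmax D' hmin'
  omega

lemma side_lemma (hconn : G.Connected) (hfree : HFree G (P3kP2 k))
    {c c' : V} {a b : Fin k → V}
    (ha4 : ∀ i, 4 ≤ G.dist c (a i)) (hapw : ∀ i j, i ≠ j → 4 ≤ G.dist (a i) (a j))
    (hb4 : ∀ i, 4 ≤ G.dist c' (b i)) (hbpw : ∀ i j, i ≠ j → 4 ≤ G.dist (b i) (b j))
    (haclq : ∀ i, G.IsClique (G.neighborSet (a i)))
    (hacnadj : ∀ i, ¬ G.Adj c' (a i)) (hacne : ∀ i, a i ≠ c')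
    {D : Set V} (hdom : IsDomSet G D) (hstab : IsStable G D)
    (haD : ∀ i, a i ∉ D) (hbD : ∀ i, b i ∉ D)
    {d₀ e₀ : V} (hd₀D : d₀ ∈ D) (he₀D : e₀ ∈ D)
    (hd₀adj : G.Adj d₀ c) (he₀adj : G.Adj e₀ c')
    {t : V} (htd : G.Adj d₀ t) (htc : ¬ G.Adj c t) (htc' : t ≠ c)
    (htD : ∀ g ∈ D, G.Adj g t → g = d₀ ∨ g = e₀) : False := by
  have tri : ∀ x y z : V, G.dist x z ≤ G.dist x y + G.dist y z := fun x y z =>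
    hconn.dist_triangle
  have hct : G.dist c t = 2 := by
    have h1 := tri c d₀ t
    have h2 := adj_dist_le hd₀adj.symm
    have h3 := adj_dist_le htd
    have h0 : G.dist c t ≠ 0 := fun h => htc' (hconn.dist_eq_zero_iff.mp h).symm
    have hne1 : G.dist c t ≠ 1 := fun h => htc (dist_eq_one_iff_adj.mp h)
    omega
  obtain ⟨α, hsat⟩ := star_lemma hconn hfree a ha4 hapw hct
  obtain ⟨g, hgD, hgadj⟩ := hdom (a α) (haD α)
  have hgt : G.Adj t g := hsat g hgadj.symm
  rcases htD g hgD hgt.symm with rfl | rfl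
  · have h1 := tri c g (a α)
    have h2 := adj_dist_le hd₀adj.symm
    have h3 := adj_dist_le hgadj
    have := ha4 α
    omega
  · have hca' : G.dist c' (a α) = 2 := by
      have h1 := tri c' g (a α)
      have h2 := adj_dist_le he₀adj.symm
      have h3 := adj_dist_le hgadj
      have h0 : G.dist c' (a α) ≠ 0 := fun h => hacne α (hconn.dist_eq_zero_iff.mp h).symm
      have hne1 : G.dist c' (a α) ≠ 1 := fun h => hacnadj α (dist_eq_one_iff_adj.mp h)
      omega
    obtain ⟨β, hsat2⟩ := star_lemma hconn hfree b hb4 hbpw hca'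
    obtain ⟨h', hh'D, hh'adj⟩ := hdom (b β) (hbD β)
    have h'aα : G.Adj (a α) h' := hsat2 h' hh'adj.symm
    have he₀aα : G.Adj (a α) g := hgadj.symm
    by_cases hhe : h' = g
    · subst hhe
      have h1 := tri c' h' (b β)
      have h2 := adj_dist_le he₀adj.symm
      have h3 := adj_dist_le hh'adj
      have := hb4 β
      omega
    · have hadj : G.Adj g h' := haclq α he₀aα h'aα (Ne.symm hhe)
      exact hstab he₀D hh'D (Ne.symm hhe) hadj

end

theorem stmt6
    {V : Type*} [Fintype V] (k : ℕ) (hk : 1 ≤ k) (G : SimpleGraph V)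
    (hconn : G.Connected) (hfree : HFree G (P3kP2 k))
    (A : Set V) (hA : ∃ f : P3kP2 (k-1) ↪g G, Set.range f = A)
    (c₁ c₂ : V) (h₁ : IsRegularVertex G k A c₁) (h₂ : IsRegularVertex G k A c₂)
    (hd : G.dist c₁ c₂ = 3) :
    ∃ D : Set V, IsMinDomSet G D ∧ ¬ IsStable G D := by
  classical
  obtain ⟨f, rfl⟩ := hA
  set B : Set V := {z | ∃ s, G.Adj z (f s)} with hB
  have hdomU : IsDomSet G Set.univ := fun v hv => absurd (Set.mem_univ v) hv
  have hSne : {n | ∃ D : Set V, IsDomSet G D ∧ D.ncard = n}.Nonempty :=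
    ⟨_, Set.univ, hdomU, rfl⟩
  obtain ⟨D₀, hD₀, hD₀n⟩ := Nat.sInf_mem hSne
  have hmin₀ : IsMinDomSet G D₀ :=
    ⟨hD₀, fun E hE => by rw [hD₀n]; exact Nat.sInf_le ⟨E, hE, rfl⟩⟩
  have hMbd : BddAbove {n | ∃ D : Set V, IsMinDomSet G D ∧ (D ∩ B).ncard = n} := by
    refine ⟨Nat.card V, ?_⟩
    rintro n ⟨D, -, rfl⟩
    have h1 : (D ∩ B).ncard ≤ (Set.univ : Set V).ncard :=
      Set.ncard_le_ncard (Set.subset_univ _) (Set.toFinite _)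
    rwa [Set.ncard_univ] at h1
  have hMne : {n | ∃ D : Set V, IsMinDomSet G D ∧ (D ∩ B).ncard = n}.Nonempty :=
    ⟨_, D₀, hmin₀, rfl⟩
  obtain ⟨D, hminD, hDB⟩ := Nat.sSup_mem hMne hMbd
  have hmax : ∀ D', IsMinDomSet G D' → (D' ∩ B).ncard ≤ (D ∩ B).ncard := by
    intro D' h'
    rw [hDB]
    exact le_csSup hMbd ⟨D', h', rfl⟩
  by_cases hstab : IsStable G D
  swap
  · exact ⟨D, hminD, hstab⟩
  obtain ⟨hc₁C, a, haC, ha4, hapw⟩ := h₁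
  obtain ⟨hc₂C, b, hbC, hb4, hbpw⟩ := h₂
  have hc₁D : c₁ ∉ D := not_mem_maxD hconn hk hfree f hminD hstab hmax hc₁C
  have hc₂D : c₂ ∉ D := not_mem_maxD hconn hk hfree f hminD hstab hmax hc₂C
  have haD : ∀ i, a i ∉ D := fun i => not_mem_maxD hconn hk hfree f hminD hstab hmax (haC i)
  have hbD : ∀ i, b i ∉ D := fun i => not_mem_maxD hconn hk hfree f hminD hstab hmax (hbC i)
  obtain ⟨d₀, hd₀D, hd₀adj⟩ := hminD.1 c₁ hc₁D
  obtain ⟨e₀, he₀D, he₀adj⟩ := hminD.1 c₂ hc₂D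
  obtain ⟨x, y, hc₁x, hxy, hyc₂⟩ := exists_mid3 hconn hd
  have tri : ∀ p q r : V, G.dist p r ≤ G.dist p q + G.dist q r := fun p q r =>
    hconn.dist_triangle
  have hd₀e₀ : d₀ ≠ e₀ := by
    rintro rfl
    have h1 := tri c₁ d₀ c₂
    have h2 := adj_dist_le hd₀adj.symm
    have h3 := adj_dist_le he₀adj
    omega
  set D' : Set V := insert x (insert y (D \ {d₀, e₀})) with hD'
  have hxD' : x ∈ D' := Set.mem_insert _ _
  have hyD' : y ∈ D' := Set.mem_insert_of_mem _ (Set.mem_insert _ _)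
  have hDsub : ∀ g ∈ D, g ≠ d₀ → g ≠ e₀ → g ∈ D' := by
    intro g hg h1 h2
    refine Set.mem_insert_of_mem _ (Set.mem_insert_of_mem _ ⟨hg, ?_⟩)
    simp only [Set.mem_insert_iff, Set.mem_singleton_iff]
    tauto
  have hdom' : IsDomSet G D' := by
    intro t ht
    by_contra hno
    push_neg at hno
    have ht1 : ¬ G.Adj c₁ t := by
      intro h
      by_cases hxt : x = t
      · exact ht (hxt ▸ hxD')
      · exact hno x hxD' (hc₁C.2 hc₁x h hxt)
    have ht1' : t ≠ c₁ := by rintro rfl; exact hno x hxD' hc₁x.symm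
    have ht2 : ¬ G.Adj c₂ t := by
      intro h
      by_cases hyt : y = t
      · exact ht (hyt ▸ hyD')
      · exact hno y hyD' (hc₂C.2 hyc₂.symm h hyt)
    have ht2' : t ≠ c₂ := by rintro rfl; exact hno y hyD' hyc₂
    have htD : ∀ g ∈ D, G.Adj g t → g = d₀ ∨ g = e₀ := by
      intro g hg hadj
      by_contra hcon
      push_neg at hcon
      exact hno g (hDsub g hg hcon.1 hcon.2) hadj
    have htDmem : t ∉ D := by
      intro htIn
      have hor : t = d₀ ∨ t = e₀ := by
        by_contra hcon
        push_neg at hcon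
        exact ht (hDsub t htIn hcon.1 hcon.2)
      rcases hor with rfl | rfl
      · exact ht1 hd₀adj.symm
      · exact ht2 he₀adj.symm
    obtain ⟨g, hgD, hgadj⟩ := hminD.1 t htDmem
    have hane : ∀ i, a i ≠ c₂ := by
      intro i he
      have h1 := ha4 i
      rw [he] at h1
      omega
    have hanadj : ∀ i, ¬ G.Adj c₂ (a i) := fun i h =>
      cdt_not_adj hk hfree f hc₂C (haC i) h
    have hbne : ∀ i, b i ≠ c₁ := by
      intro i he
      have h1 := hb4 i
      rw [he] at h1
      have h2 : G.dist c₂ c₁ = 3 := by rw [SimpleGraph.dist_comm]; exact hd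
      omega
    have hbnadj : ∀ i, ¬ G.Adj c₁ (b i) := fun i h =>
      cdt_not_adj hk hfree f hc₁C (hbC i) h
    have haclq : ∀ i, G.IsClique (G.neighborSet (a i)) := fun i => (haC i).2
    have hbclq : ∀ i, G.IsClique (G.neighborSet (b i)) := fun i => (hbC i).2
    rcases htD g hgD hgadj with rfl | rfl
    · exact side_lemma hconn hfree ha4 hapw hb4 hbpw haclq hanadj hane hminD.1 hstab
        haD hbD hgD he₀D hd₀adj he₀adj hgadj ht1 ht1' htD
    · exact side_lemma hconn hfree hb4 hbpw ha4 hapw hbclq hbnadj hbne hminD.1 hstab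
        hbD haD hgD hd₀D he₀adj hd₀adj hgadj ht2 ht2'
        (fun g' hg' ha' => Or.symm (htD g' hg' ha'))
  have hsub2 : ({d₀, e₀} : Set V) ⊆ D := by
    rintro z hz
    rcases hz with rfl | hz
    · exact hd₀D
    · rw [Set.mem_singleton_iff] at hz
      subst hz
      exact he₀D
  have h2le : 2 ≤ D.ncard := by
    have := Set.ncard_le_ncard hsub2 (Set.toFinite D)
    rwa [Set.ncard_pair hd₀e₀] at this
  have hdiff : (D \ {d₀, e₀}).ncard = D.ncard - 2 := by
    rw [Set.ncard_diff hsub2, Set.ncard_pair hd₀e₀]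
  have hcard : D'.ncard ≤ D.ncard := by
    have i1 := Set.ncard_insert_le x (insert y (D \ ({d₀, e₀} : Set V)))
    have i2 := Set.ncard_insert_le y (D \ ({d₀, e₀} : Set V))
    rw [hD']
    omega
  exact ⟨D', ⟨hdom', fun E hE => le_trans hcard (hminD.2 E hE)⟩,
    fun hst => hst hxD' hyD' hxy.ne hxy⟩
end

section
/- Let k ≥ 1, let G be a finite connected simple graph that is (P3+kP2)-free and contains a vertex set A inducing P3+(k-1)P2, and assume that every minimum dominating set of G is a stable set. Let D be a minimum dominating set of G. If there exists a vertex b0 ∈ B ∩ D which has at least two private neighbours in C with respect to D, then |B ∩ D| ≤ k·|A|. -/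
open SimpleGraph

lemma P3kP2_adj_ll (k : ℕ) (a b : Fin 3) :
    (P3kP2 k).Adj (Sum.inl a) (Sum.inl b) ↔ a ≠ b ∧ ((b:ℕ) = a + 1 ∨ (a:ℕ) = b + 1) := by
  simp [P3kP2, SimpleGraph.fromRel_adj]

lemma P3kP2_adj_rr (k : ℕ) (a b : Fin k × Fin 2) :
    (P3kP2 k).Adj (Sum.inr a) (Sum.inr b) ↔ a.1 = b.1 ∧ a.2 ≠ b.2 := by
  simp only [P3kP2, SimpleGraph.fromRel_adj, Sum.inr.injEq]
  constructor
  · rintro ⟨hne, h | h⟩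
    · exact h
    · exact ⟨h.1.symm, fun he => h.2 he.symm⟩
  · rintro ⟨h1, h2⟩
    refine ⟨fun he => ?_, Or.inl ⟨h1, h2⟩⟩
    · exact h2 (congrArg Prod.snd (Sum.inr_injective he))

lemma P3kP2_adj_lr (k : ℕ) (a : Fin 3) (b : Fin k × Fin 2) :
    ¬ (P3kP2 k).Adj (Sum.inl a) (Sum.inr b) := by
  simp [P3kP2, SimpleGraph.fromRel_adj]

lemma P3kP2_adj_rl (k : ℕ) (a : Fin k × Fin 2) (b : Fin 3) :
    ¬ (P3kP2 k).Adj (Sum.inr a) (Sum.inl b) := by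
  simp [P3kP2, SimpleGraph.fromRel_adj]

/-- Core: uniform hypotheses embedding builder. -/
lemma config_core {V : Type*} {G : SimpleGraph V} {k : ℕ} (P : Fin 3 → V) (W : Fin k → Fin 2 → V)
    (hP : ∀ a b : Fin 3, G.Adj (P a) (P b) ↔ ((b:ℕ) = (a:ℕ) + 1 ∨ (a:ℕ) = (b:ℕ) + 1))
    (hPinj : Function.Injective P)
    (hW : ∀ i c j d, G.Adj (W i c) (W j d) ↔ (i = j ∧ c ≠ d))
    (hWinj : ∀ i c j d, W i c = W j d → (i = j ∧ c = d))
    (hPW : ∀ a i c, ¬ G.Adj (P a) (W i c))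
    (hPWne : ∀ a i c, P a ≠ W i c)
    (hfree : HFree G (P3kP2 k)) : False := by
  have hinj : Function.Injective (Sum.elim P (fun z : Fin k × Fin 2 => W z.1 z.2)) := by
    rintro (a | ⟨i, c⟩) (b | ⟨j, d⟩) h
    · exact congrArg Sum.inl (hPinj h)
    · exact absurd h (hPWne a j d)
    · exact absurd h.symm (hPWne b i c)
    · obtain ⟨h1, h2⟩ := hWinj i c j d h
      subst h1; subst h2; rfl
  refine hfree.false ⟨⟨Sum.elim P (fun z => W z.1 z.2), hinj⟩, ?_⟩
  · rintro (a | ⟨i, c⟩) (b | ⟨j, d⟩) <;>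
      simp only [Function.Embedding.coeFn_mk, Sum.elim_inl, Sum.elim_inr]
    · rw [P3kP2_adj_ll, hP]
      constructor
      · intro h
        exact ⟨fun he => by subst he; rcases h with h | h <;> omega, h⟩
      · exact And.right
    · rw [iff_false_intro (P3kP2_adj_lr k a (j,d)), iff_false]
      exact hPW a j d
    · rw [iff_false_intro (P3kP2_adj_rl k (i,c) b), iff_false]
      exact fun h => hPW b i c h.symm
    · rw [P3kP2_adj_rr, hW]

/-- Raw version: an induced P3 `p-q-r` plus `k` anticomplete edges contradicts
(P3+kP2)-freeness. -/
lemma config {V : Type*} {G : SimpleGraph V} {k : ℕ} (p q r : V) (u v : Fin k → V)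
    (hpq : G.Adj p q) (hqr : G.Adj q r) (hpr : ¬ G.Adj p r) (hprne : p ≠ r)
    (he : ∀ i, G.Adj (u i) (v i))
    (hPu : ∀ i, ¬G.Adj p (u i) ∧ ¬G.Adj q (u i) ∧ ¬G.Adj r (u i) ∧ p ≠ u i ∧ q ≠ u i ∧ r ≠ u i)
    (hPv : ∀ i, ¬G.Adj p (v i) ∧ ¬G.Adj q (v i) ∧ ¬G.Adj r (v i) ∧ p ≠ v i ∧ q ≠ v i ∧ r ≠ v i)
    (hij : ∀ i j, i ≠ j → ¬G.Adj (u i) (u j) ∧ ¬G.Adj (v i) (v j) ∧ ¬G.Adj (u i) (v j) ∧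
      u i ≠ u j ∧ v i ≠ v j ∧ u i ≠ v j)
    (hfree : HFree G (P3kP2 k)) : False := by
  have h20 : ¬ G.Adj r p := fun h => hpr h.symm
  refine config_core ![p, q, r] (fun i => ![u i, v i]) ?_ ?_ ?_ ?_ ?_ ?_ hfree
  · intro a b
    fin_cases a <;> fin_cases b <;>
      simp only [Matrix.cons_val_zero, Matrix.cons_val_one, Matrix.head_cons,
        Matrix.cons_val_two, Matrix.tail_cons, Fin.isValue] <;>
      norm_num
    exacts [hpq, hpr, hpq.symm, hqr, h20, hqr.symm]
  · intro a b h
    fin_cases a <;> fin_cases b <;>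
      simp_all only [Matrix.cons_val_zero, Matrix.cons_val_one, Matrix.head_cons,
        Matrix.cons_val_two, Matrix.tail_cons, Fin.isValue] <;>
      first
        | rfl
        | exact absurd h hpq.ne | exact absurd h hqr.ne | exact absurd h hprne
        | exact absurd h.symm hpq.ne | exact absurd h.symm hqr.ne | exact absurd h.symm hprne
  · intro i c j d
    fin_cases c <;> fin_cases d <;>
      simp only [Matrix.cons_val_zero, Matrix.cons_val_one, Matrix.head_cons, Fin.isValue]
    · constructor
      · intro h
        by_cases hc : i = j
        · subst hc; exact absurd h G.irrefl
        · exact absurd h (hij i j hc).1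
      · rintro ⟨_, hcd⟩; exact absurd rfl hcd
    · constructor
      · intro h
        by_cases hc : i = j
        · exact ⟨hc, by decide⟩
        · exact absurd h (hij i j hc).2.2.1
      · rintro ⟨rfl, _⟩; exact he i
    · constructor
      · intro h
        by_cases hc : i = j
        · exact ⟨hc, by decide⟩
        · exact absurd h.symm (hij j i (Ne.symm hc)).2.2.1
      · rintro ⟨rfl, _⟩; exact (he i).symm
    · constructor
      · intro h
        by_cases hc : i = j
        · subst hc; exact absurd h G.irrefl
        · exact absurd h (hij i j hc).2.1
      · rintro ⟨_, hcd⟩; exact absurd rfl hcd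
  · intro i c j d h
    fin_cases c <;> fin_cases d <;>
      simp_all only [Matrix.cons_val_zero, Matrix.cons_val_one, Matrix.head_cons, Fin.isValue]
    · by_cases hc : i = j
      · exact ⟨hc, trivial⟩
      · exact absurd h (hij i j hc).2.2.2.1
    · by_cases hc : i = j
      · subst hc; exact absurd h (he i).ne
      · exact absurd h (hij i j hc).2.2.2.2.2
    · by_cases hc : i = j
      · subst hc; exact absurd h.symm (he i).ne
      · exact absurd h.symm (hij j i (Ne.symm hc)).2.2.2.2.2
    · by_cases hc : i = j
      · exact ⟨hc, trivial⟩
      · exact absurd h (hij i j hc).2.2.2.2.1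
  · intro a i c
    fin_cases a <;> fin_cases c <;>
      simp only [Matrix.cons_val_zero, Matrix.cons_val_one, Matrix.head_cons,
        Matrix.cons_val_two, Matrix.tail_cons, Fin.isValue]
    exacts [(hPu i).1, (hPv i).1, (hPu i).2.1, (hPv i).2.1, (hPu i).2.2.1, (hPv i).2.2.1]
  · intro a i c
    fin_cases a <;> fin_cases c <;>
      simp only [Matrix.cons_val_zero, Matrix.cons_val_one, Matrix.head_cons,
        Matrix.cons_val_two, Matrix.tail_cons, Fin.isValue]
    exacts [(hPu i).2.2.2.1, (hPv i).2.2.2.1, (hPu i).2.2.2.2.1, (hPv i).2.2.2.2.1,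
      (hPu i).2.2.2.2.2, (hPv i).2.2.2.2.2]

/-- An edge `u-w` anticomplete to (and disjoint from) the range of an embedding of
`P3kP2 n` contradicts `(P3+(n+1)P2)`-freeness. -/
lemma extend_edge {V : Type*} {G : SimpleGraph V} {n : ℕ} (f : P3kP2 n ↪g G) (u w : V)
    (huw : G.Adj u w)
    (hu : ∀ z, ¬ G.Adj (f z) u ∧ f z ≠ u)
    (hw : ∀ z, ¬ G.Adj (f z) w ∧ f z ≠ w)
    (hfree : HFree G (P3kP2 (n+1))) : False := by
  classical
  set e : Fin 2 → V := fun c => if c = 0 then u else w with he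
  have headj : ∀ c d : Fin 2, G.Adj (e c) (e d) ↔ c ≠ d := by
    intro c d
    fin_cases c <;> fin_cases d <;> simp [he, huw, huw.symm]
  have heinj : ∀ c d : Fin 2, e c = e d → c = d := by
    intro c d
    fin_cases c <;> fin_cases d <;> simp [he, huw.ne, huw.ne.symm]
  have hef : ∀ (z) (c : Fin 2), ¬ G.Adj (f z) (e c) ∧ f z ≠ e c := by
    intro z c
    fin_cases c
    · simpa [he] using hu z
    · simpa [he] using hw z
  set W : Fin (n+1) → Fin 2 → V := fun i c =>
    if h : (i:ℕ) < n then f (Sum.inr (⟨i, h⟩, c)) else e c with hW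
  have hWlt : ∀ (i : Fin (n+1)) (h : (i:ℕ) < n) (c : Fin 2), W i c = f (Sum.inr (⟨i, h⟩, c)) := by
    intro i h c; simp [hW, dif_pos h]
  have hWge : ∀ (i : Fin (n+1)) (h : ¬ (i:ℕ) < n) (c : Fin 2), W i c = e c := by
    intro i h c; simp [hW, dif_neg h]
  refine config_core (fun a => f (Sum.inl a)) W ?_ ?_ ?_ ?_ ?_ ?_ hfree
  · intro a b
    rw [f.map_adj_iff, P3kP2_adj_ll]
    constructor
    · rintro ⟨_, h⟩; exact h
    · intro h
      exact ⟨fun hab => by subst hab; rcases h with h | h <;> omega, h⟩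
  · intro a b h
    exact Sum.inl_injective (f.injective h)
  · intro i c j d
    by_cases hi : (i:ℕ) < n <;> by_cases hj : (j:ℕ) < n
    · rw [hWlt i hi c, hWlt j hj d, f.map_adj_iff, P3kP2_adj_rr]
      constructor
      · rintro ⟨h1, h2⟩
        refine ⟨Fin.ext ?_, h2⟩
        have : (⟨(i:ℕ), hi⟩ : Fin n) = ⟨(j:ℕ), hj⟩ := h1
        injection this
      · rintro ⟨rfl, h2⟩
        exact ⟨rfl, h2⟩
    · rw [hWlt i hi c, hWge j hj d]
      constructor
      · intro h; exact absurd h (hef _ d).1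
      · rintro ⟨rfl, _⟩; exact absurd hi hj
    · rw [hWge i hi c, hWlt j hj d]
      constructor
      · intro h; exact absurd h.symm (hef _ c).1
      · rintro ⟨rfl, _⟩; exact absurd hj hi
    · rw [hWge i hi c, hWge j hj d, headj]
      have hij : i = j := by
        have := i.isLt; have := j.isLt
        exact Fin.ext (by omega)
      simp [hij]
  · intro i c j d h
    by_cases hi : (i:ℕ) < n <;> by_cases hj : (j:ℕ) < n
    · rw [hWlt i hi c, hWlt j hj d] at h
      have := f.injective h
      rw [Sum.inr.injEq, Prod.mk.injEq] at this
      have h1 : (⟨(i:ℕ), hi⟩ : Fin n) = ⟨(j:ℕ), hj⟩ := this.1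
      refine ⟨Fin.ext ?_, this.2⟩
      injection h1
    · rw [hWlt i hi c, hWge j hj d] at h
      exact absurd h (hef _ d).2
    · rw [hWge i hi c, hWlt j hj d] at h
      exact absurd h.symm (hef _ c).2
    · rw [hWge i hi c, hWge j hj d] at h
      have hij : i = j := by
        have := i.isLt; have := j.isLt
        exact Fin.ext (by omega)
      exact ⟨hij, heinj c d h⟩
  · intro a i c
    by_cases hi : (i:ℕ) < n
    · rw [hWlt i hi c, f.map_adj_iff]
      exact P3kP2_adj_lr n a _
    · rw [hWge i hi c]
      exact (hef _ c).1
  · intro a i c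
    by_cases hi : (i:ℕ) < n
    · rw [hWlt i hi c]
      intro h
      exact absurd (f.injective h) (by simp)
    · rw [hWge i hi c]
      exact (hef _ c).2


def gbound : ℕ → ℕ
  | 0 => 0
  | 1 => 0
  | (k+2) => gbound (k+1) + k + 2

/-- A "strongly disjoint system": `m` traces with private representatives. -/
def SDS {V : Type*} (t : V → Set V) (I : Set V) (m : ℕ) : Prop :=
  ∃ c s : Fin m → V, (∀ i, c i ∈ I) ∧ (∀ i, s i ∈ t (c i)) ∧
    Function.Injective c ∧ ∀ i j, i ≠ j → s i ∉ t (c j)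

/-- An SDS avoiding a region `E` and a vertex `s0`. -/
def SDSx {V : Type*} (t : V → Set V) (I : Set V) (m : ℕ) (E : Set V) (s0 : V) : Prop :=
  ∃ c s : Fin m → V, (∀ i, c i ∈ I) ∧ (∀ i, s i ∈ t (c i)) ∧ Function.Injective c ∧
    (∀ i j, i ≠ j → s i ∉ t (c j)) ∧ (∀ i, s i ∉ E) ∧ (∀ i, s0 ∉ t (c i))

lemma exists_inj_of_le_ncard {V : Type*} [Fintype V] {I : Set V} {m : ℕ} (h : m ≤ I.ncard) :
    ∃ c : Fin m → V, Function.Injective c ∧ ∀ i, c i ∈ I := by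
  classical
  rw [Set.ncard_eq_toFinset_card'] at h
  obtain ⟨u, hu, hcard⟩ := Finset.exists_subset_card_eq h
  have e := u.equivFinOfCardEq hcard
  refine ⟨fun i => (e.symm i : V), fun i j hij => ?_, fun i => ?_⟩
  · exact e.symm.injective (Subtype.coe_injective hij)
  · have := (e.symm i).2
    have := hu this
    simpa using this

lemma gbound_succ (k' : ℕ) : gbound (k'+2) = gbound (k'+1) + k' + 2 := rfl

lemma le_gbound_succ (k : ℕ) : k ≤ gbound (k+1) := by
  induction k with
  | zero => simp [gbound]
  | succ k ih =>
    rw [gbound_succ k]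
    omega

lemma traceLemma {V : Type*} [Fintype V] (k : ℕ) (t : V → Set V) (I : Set V)
    (hne : ∀ c ∈ I, (t c).Nonempty)
    (ha : ¬ SDS t I k)
    (hb : ∀ c0 ∈ I, ∀ c1 ∈ I, c0 ≠ c1 → ∀ s0, s0 ∈ t c0 → s0 ∈ t c1 →
      ¬ SDSx t I (k-1) (t c0 ∪ t c1) s0) :
    ∃ Y : Set V, Y.ncard ≤ gbound k ∧ ∀ c ∈ I, (t c ∩ Y).Nonempty := by
  classical
  induction k generalizing t I with
  | zero =>
    exact absurd ⟨Fin.elim0, Fin.elim0, fun i => i.elim0, fun i => i.elim0, fun i => i.elim0,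
      fun i => i.elim0⟩ ha
  | succ k ih =>
    simp only [Nat.add_sub_cancel] at hb
    by_cases hcap : ∃ c0 ∈ I, ∃ c1 ∈ I, c0 ≠ c1 ∧ (t c0 ∩ t c1).Nonempty
    · -- intersecting pair exists; pick one with minimal union
      rcases k with _ | k'
      · -- k+1 = 1 : impossible since SDSx _ _ 0 is trivial
        obtain ⟨c0, hc0, c1, hc1, hne01, s0, hs00, hs01⟩ := hcap
        exact absurd ⟨Fin.elim0, Fin.elim0, fun i => i.elim0, fun i => i.elim0,
          fun i => i.elim0, fun i => i.elim0, fun i => i.elim0, fun i => i.elim0⟩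
          (hb c0 hc0 c1 hc1 hne01 s0 hs00 hs01)
      set P : ℕ → Prop := fun m => ∃ c0 ∈ I, ∃ c1 ∈ I, c0 ≠ c1 ∧ (t c0 ∩ t c1).Nonempty ∧
        (t c0 ∪ t c1).ncard = m with hPdef
      have hPne : {m | P m}.Nonempty := by
        obtain ⟨c0, hc0, c1, hc1, hne01, hcap2⟩ := hcap
        exact ⟨_, c0, hc0, c1, hc1, hne01, hcap2, rfl⟩
      obtain ⟨c0, hc0, c1, hc1, hne01, ⟨s0, hs00, hs01⟩, hNcard⟩ := Nat.sInf_mem hPne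
      have hmin : ∀ d0 ∈ I, ∀ d1 ∈ I, d0 ≠ d1 → (t d0 ∩ t d1).Nonempty →
          sInf {m | P m} ≤ (t d0 ∪ t d1).ncard := by
        intro d0 hd0 d1 hd1 hne2 hcap2
        exact Nat.sInf_le ⟨d0, hd0, d1, hd1, hne2, hcap2, rfl⟩
      set U := t c0 ∪ t c1 with hU
      set t' : V → Set V := fun c => t c \ U with ht'
      set I' : Set V := {c | c ∈ I ∧ s0 ∉ t c ∧ (t c \ U).Nonempty} with hI'
      set H : Set V := {c | c ∈ I ∧ s0 ∉ t c ∧ ¬ (t c \ U).Nonempty} with hH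
      have hs0U : s0 ∈ U := Or.inl hs00
      -- (a') no SDS of size k'+1 for (t', I')
      have ha' : ¬ SDS t' I' (k'+1) := by
        rintro ⟨c, s, h1, h2, h3, h4⟩
        refine hb c0 hc0 c1 hc1 hne01 s0 hs00 hs01
          ⟨c, s, fun i => (h1 i).1, fun i => ((h2 i).1 : _), h3, ?_, ?_, ?_⟩
        · intro i j hij hmem
          exact h4 i j hij ⟨hmem, (h2 i).2⟩
        · intro i
          exact (h2 i).2
        · intro i
          exact (h1 i).2.1
      -- (b') inherited pair condition
      have hb' : ∀ d0 ∈ I', ∀ d1 ∈ I', d0 ≠ d1 → ∀ u0, u0 ∈ t' d0 → u0 ∈ t' d1 →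
          ¬ SDSx t' I' k' (t' d0 ∪ t' d1) u0 := by
        rintro d0 hd0 d1 hd1 hne2 u0 hu0 hu1 ⟨c, s, h1, h2, h3, h4, h5, h6⟩
        refine hb d0 hd0.1 d1 hd1.1 hne2 u0 hu0.1 hu1.1
          ⟨Fin.cons c0 c, Fin.cons s0 s, ?_, ?_, ?_, ?_, ?_, ?_⟩
        · intro i
          refine Fin.cases ?_ (fun i => ?_) i
          · simpa using hc0
          · simpa using (h1 i).1
        · intro i
          refine Fin.cases ?_ (fun i => ?_) i
          · simpa using hs00
          · simpa using (h2 i).1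
        · rw [Fin.cons_injective_iff]
          refine ⟨?_, h3⟩
          rintro ⟨i, hi⟩
          exact (h1 i).2.1 (hi ▸ hs00)
        · intro i j
          refine Fin.cases ?_ (fun i' => ?_) i <;> refine Fin.cases ?_ (fun j' => ?_) j <;>
            simp only [Fin.cons_zero, Fin.cons_succ] <;> intro hij
          · exact absurd rfl hij
          · exact (h1 j').2.1
          · intro hm
            exact (h2 i').2 (Or.inl hm)
          · intro hm
            have hij' : i' ≠ j' := fun h => hij (congrArg Fin.succ h)
            exact h4 i' j' hij' ⟨hm, (h2 i').2⟩
        · intro i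
          refine Fin.cases ?_ (fun i' => ?_) i <;> simp only [Fin.cons_zero, Fin.cons_succ]
          · rintro (hm | hm)
            exacts [hd0.2.1 hm, hd1.2.1 hm]
          · rintro (hm | hm)
            · exact h5 i' (Or.inl ⟨hm, (h2 i').2⟩)
            · exact h5 i' (Or.inr ⟨hm, (h2 i').2⟩)
        · intro i
          refine Fin.cases ?_ (fun i' => ?_) i <;> simp only [Fin.cons_zero, Fin.cons_succ]
          · intro hm
            exact hu0.2 (Or.inl hm)
          · intro hm
            exact h6 i' ⟨hm, hu0.2⟩
      have hne' : ∀ c ∈ I', (t' c).Nonempty := fun c hc => hc.2.2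
      obtain ⟨Y', hY'card, hY'cov⟩ := ih t' I' hne' ha' (by
        simpa only [Nat.add_sub_cancel] using hb')
      -- H has pairwise disjoint traces
      have hHsub : ∀ d ∈ H, t d ⊆ U := by
        intro d hd
        exact Set.diff_eq_empty.mp (Set.not_nonempty_iff_eq_empty.mp hd.2.2)
      have hHdisj : ∀ d0 ∈ H, ∀ d1 ∈ H, d0 ≠ d1 → t d0 ∩ t d1 = ∅ := by
        intro d0 hd0 d1 hd1 hne2
        by_contra hcap2
        have hcap3 := Set.nonempty_iff_ne_empty.mpr hcap2
        have h1 := hmin d0 hd0.1 d1 hd1.1 hne2 hcap3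
        have h2 : t d0 ∪ t d1 ⊆ U \ {s0} := by
          intro w hw
          refine ⟨?_, ?_⟩
          · rcases hw with hw | hw
            exacts [hHsub d0 hd0 hw, hHsub d1 hd1 hw]
          · rintro rfl
            rcases hw with hw | hw
            exacts [hd0.2.1 hw, hd1.2.1 hw]
        have h3 : (t d0 ∪ t d1).ncard ≤ (U \ {s0}).ncard :=
          Set.ncard_le_ncard h2 (U \ {s0}).toFinite
        have h4 : (U \ {s0}).ncard < U.ncard :=
          Set.ncard_diff_singleton_lt_of_mem hs0U U.toFinite
        rw [hNcard] at h4
        omega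
      have hHcard : H.ncard ≤ k' + 1 := by
        by_contra hgt
        push_neg at hgt
        obtain ⟨c, hcinj, hcH⟩ := exists_inj_of_le_ncard hgt
        refine ha ⟨c, fun i => (hne (c i) (hcH i).1).choose, fun i => (hcH i).1,
          fun i => (hne (c i) (hcH i).1).choose_spec, hcinj, ?_⟩
        intro i j hij hmem
        have hd := hHdisj (c i) (hcH i) (c j) (hcH j) (fun h => hij (hcinj h))
        have : (hne (c i) (hcH i).1).choose ∈ t (c i) ∩ t (c j) :=
          ⟨(hne (c i) (hcH i).1).choose_spec, hmem⟩
        simp [hd] at this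
      set χ : V → V := fun d => if hd : d ∈ I then (hne d hd).choose else d with hχ
      refine ⟨{s0} ∪ χ '' H ∪ Y', ?_, ?_⟩
      · have e1 : ({s0} ∪ χ '' H ∪ Y').ncard ≤ ({s0} : Set V).ncard + (χ '' H).ncard + Y'.ncard :=
          le_trans (Set.ncard_union_le _ _) (by
            have := Set.ncard_union_le ({s0} : Set V) (χ '' H)
            omega)
        have e2 : (χ '' H).ncard ≤ H.ncard := Set.ncard_image_le H.toFinite
        have e3 : ({s0} : Set V).ncard = 1 := Set.ncard_singleton s0
        rw [gbound_succ k']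
        omega
      · intro c hc
        by_cases hs : s0 ∈ t c
        · exact ⟨s0, hs, Or.inl (Or.inl rfl)⟩
        by_cases hcU : (t c \ U).Nonempty
        · obtain ⟨w, hw1, hw2⟩ := hY'cov c ⟨hc, hs, hcU⟩
          exact ⟨w, hw1.1, Or.inr hw2⟩
        · have hcH : c ∈ H := ⟨hc, hs, hcU⟩
          refine ⟨χ c, ?_, Or.inl (Or.inr (Set.mem_image_of_mem χ hcH))⟩
          simp only [hχ, dif_pos hc]
          exact (hne c hc).choose_spec
    · -- no intersecting pairs: traces pairwise disjoint
      push_neg at hcap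
      have hIcard : I.ncard ≤ k := by
        by_contra hgt
        push_neg at hgt
        obtain ⟨c, hcinj, hcI⟩ := exists_inj_of_le_ncard hgt
        refine ha ⟨c, fun i => (hne (c i) (hcI i)).choose, hcI,
          fun i => (hne (c i) (hcI i)).choose_spec, hcinj, ?_⟩
        intro i j hij hmem
        have hd := hcap (c i) (hcI i) (c j) (hcI j) (fun h => hij (hcinj h))
        have : (hne (c i) (hcI i)).choose ∈ t (c i) ∩ t (c j) :=
          ⟨(hne (c i) (hcI i)).choose_spec, hmem⟩
        simp [hd] at this
      classical
      set χ : V → V := fun d => if hd : d ∈ I then (hne d hd).choose else d with hχ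
      refine ⟨χ '' I, ?_, ?_⟩
      · calc (χ '' I).ncard ≤ I.ncard := Set.ncard_image_le I.toFinite
          _ ≤ k := hIcard
          _ ≤ gbound (k+1) := le_gbound_succ k
      · intro c hc
        refine ⟨χ c, ?_, Set.mem_image_of_mem χ hc⟩
        simp only [hχ, dif_pos hc]
        exact (hne c hc).choose_spec


lemma gb_ineq (n : ℕ) : gbound (n+1) + (2*n+3) ≤ (n+1)*(2*n+3) := by
  induction n with
  | zero => simp [gbound]
  | succ m ih =>
    have h1 : gbound (m+2) = gbound (m+1) + m + 2 := gbound_succ m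
    nlinarith [ih]


theorem stmt7
    {V : Type*} [Fintype V] (k : ℕ) (hk : 1 ≤ k) (G : SimpleGraph V)
    (hconn : G.Connected) (hfree : HFree G (P3kP2 k))
    (A : Set V) (hA : ∃ f : P3kP2 (k-1) ↪g G, Set.range f = A)
    (B C : Set V) (hB : B = {v | distToSet G v A = 1})
    (hC : C = {v | distToSet G v A = 2})
    (hstable : ∀ D : Set V, IsMinDomSet G D → IsStable G D)
    (D : Set V) (hD : IsMinDomSet G D)
    (b₀ : V) (hb₀ : b₀ ∈ B ∩ D)
    (hpriv : ∃ x y : V, x ∈ C ∧ y ∈ C ∧ x ≠ y ∧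
      IsPrivateNbr G D b₀ x ∧ IsPrivateNbr G D b₀ y) :
    (B ∩ D).ncard ≤ k * A.ncard := by
  classical
  obtain ⟨n, rfl⟩ : ∃ n, k = n + 1 := ⟨k - 1, by omega⟩
  have hA' : ∃ f : P3kP2 n ↪g G, Set.range f = A := hA
  obtain ⟨f, hfA⟩ := hA' 
  obtain ⟨x, y, hxC, hyC, hxy, hpx, hpy⟩ := hpriv
  have hx2 : distToSet G x A = 2 := by rw [hC] at hxC; exact hxC
  have hy2 : distToSet G y A = 2 := by rw [hC] at hyC; exact hyC
  have hb₀B : distToSet G b₀ A = 1 := by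
    have := hb₀.1; rw [hB] at this; exact this
  have hb₀D : b₀ ∈ D := hb₀.2
  have hAne : A.Nonempty := ⟨f (Sum.inl 0), by rw [← hfA]; exact Set.mem_range_self _⟩
  -- distance toolkit
  have hle : ∀ v a, a ∈ A → distToSet G v A ≤ G.dist v a := by
    intro v a ha
    exact Nat.sInf_le ⟨a, ha, rfl⟩
  have hinfmem : ∀ v, ∃ a ∈ A, distToSet G v A = G.dist v a := by
    intro v
    obtain ⟨a, ha, heq⟩ := Nat.sInf_mem (hAne.image (G.dist v))
    exact ⟨a, ha, heq.symm⟩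
  have hfar : ∀ v, distToSet G v A = 2 → ∀ a ∈ A, ¬ G.Adj v a ∧ v ≠ a := by
    intro v hv a ha
    constructor
    · intro hadj
      have h1 : G.dist v a = 1 := SimpleGraph.dist_eq_one_iff_adj.mpr hadj
      have := hle v a ha
      omega
    · rintro rfl
      have h0 : G.dist v v = 0 := by simp
      have := hle v v ha
      omega
  have hadj1 : ∀ v, distToSet G v A = 1 → ∃ a ∈ A, G.Adj v a := by
    intro v hv
    obtain ⟨a, ha, heq⟩ := hinfmem v
    exact ⟨a, ha, SimpleGraph.dist_eq_one_iff_adj.mp (by omega)⟩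
  have hmk2 : ∀ v u a, v ∉ A → (∀ a' ∈ A, ¬ G.Adj v a') → G.Adj v u → G.Adj u a → a ∈ A →
      distToSet G v A = 2 := by
    intro v u a hvA hnoadj hvu hua haA
    have hub : distToSet G v A ≤ 2 := by
      refine le_trans (hle v a haA) ?_
      have := G.dist_le (SimpleGraph.Walk.cons hvu (SimpleGraph.Walk.cons hua SimpleGraph.Walk.nil))
      simpa using this
    obtain ⟨a', ha', heq⟩ := hinfmem v
    have h0 : G.dist v a' ≠ 0 := by
      intro h
      rcases SimpleGraph.dist_eq_zero_iff_eq_or_not_reachable.mp h with h | h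
      · exact hvA (h ▸ ha')
      · exact h (hconn.preconnected v a')
    have h1 : G.dist v a' ≠ 1 := by
      intro h
      exact hnoadj a' ha' (SimpleGraph.dist_eq_one_iff_adj.mp h)
    omega
  -- independence of distance-2 vertices
  have hCind : ∀ u w, distToSet G u A = 2 → distToSet G w A = 2 → u ≠ w → ¬ G.Adj u w := by
    intro u w hu hw huw hadj
    refine extend_edge f u w hadj ?_ ?_ hfree
    · intro z
      have hz : f z ∈ A := by rw [← hfA]; exact Set.mem_range_self _
      have := hfar u hu (f z) hz
      exact ⟨fun h => this.1 h.symm, fun h => this.2 h.symm⟩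
    · intro z
      have hz : f z ∈ A := by rw [← hfA]; exact Set.mem_range_self _
      have := hfar w hw (f z) hz
      exact ⟨fun h => this.1 h.symm, fun h => this.2 h.symm⟩
  -- privacy toolkit
  have hxneb : x ≠ b₀ := by
    intro h; rw [h, hb₀B] at hx2; omega
  have hyneb : y ≠ b₀ := by
    intro h; rw [h, hb₀B] at hy2; omega
  have hxb : G.Adj x b₀ := by
    have : b₀ ∈ (insert x (G.neighborSet x)) ∩ D := by rw [hpx]; rfl
    rcases this.1 with h | h
    · exact absurd h.symm hxneb
    · exact h
  have hyb : G.Adj y b₀ := by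
    have : b₀ ∈ (insert y (G.neighborSet y)) ∩ D := by rw [hpy]; rfl
    rcases this.1 with h | h
    · exact absurd h.symm hyneb
    · exact h
  have hprivx : ∀ s, s ∈ D → s ≠ b₀ → ¬ G.Adj x s ∧ x ≠ s := by
    intro s hsD hsb
    constructor
    · intro hadj
      have : s ∈ (insert x (G.neighborSet x)) ∩ D := ⟨Or.inr hadj, hsD⟩
      rw [hpx] at this
      exact hsb this
    · intro he
      have : s ∈ (insert x (G.neighborSet x)) ∩ D := ⟨Or.inl he.symm, hsD⟩
      rw [hpx] at this
      exact hsb this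
  have hprivy : ∀ s, s ∈ D → s ≠ b₀ → ¬ G.Adj y s ∧ y ≠ s := by
    intro s hsD hsb
    constructor
    · intro hadj
      have : s ∈ (insert y (G.neighborSet y)) ∩ D := ⟨Or.inr hadj, hsD⟩
      rw [hpy] at this
      exact hsb this
    · intro he
      have : s ∈ (insert y (G.neighborSet y)) ∩ D := ⟨Or.inl he.symm, hsD⟩
      rw [hpy] at this
      exact hsb this
  have hst : ∀ s ∈ D, ∀ s' ∈ D, s ≠ s' → ¬ G.Adj s s' := by
    intro s hs s' hs' hss
    exact hstable D hD hs hs' hss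
  have hxny : ¬ G.Adj x y := hCind x y hx2 hy2 hxy
  -- the trace system
  set t : V → Set V := fun c => {s | G.Adj c s ∧ s ∈ D} with ht
  set I : Set V := {c | distToSet G c A = 2 ∧ c ∉ D ∧ ∀ s, G.Adj c s → s ∈ D → s ≠ b₀}
    with hI
  have hInadjb : ∀ c ∈ I, ¬ G.Adj c b₀ ∧ c ≠ b₀ := by
    intro c hc
    exact ⟨fun h => hc.2.2 b₀ h hb₀D rfl, fun h => hc.2.1 (h ▸ hb₀D)⟩
  have hxneI : ∀ c ∈ I, x ≠ c := by
    intro c hc h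
    exact hc.2.2 b₀ (h ▸ hxb) hb₀D rfl
  have hyneI : ∀ c ∈ I, y ≠ c := by
    intro c hc h
    exact hc.2.2 b₀ (h ▸ hyb) hb₀D rfl
  have hnetr : ∀ c ∈ I, (t c).Nonempty := by
    intro c hc
    obtain ⟨u, hu, hadj⟩ := hD.1 c hc.2.1
    exact ⟨u, hadj.symm, hu⟩
  have hsneb : ∀ c ∈ I, ∀ s, s ∈ t c → s ≠ b₀ := by
    intro c hc s hs
    exact hc.2.2 s hs.1 hs.2
  have hatr : ¬ SDS t I (n+1) := by
    rintro ⟨c, s, h1, h2, h3, h4⟩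
    have sD : ∀ i, s i ∈ D := fun i => (h2 i).2
    have sneb : ∀ i, s i ≠ b₀ := fun i => hsneb (c i) (h1 i) (s i) (h2 i)
    refine config x b₀ y s c hxb (hyb.symm) hxny hxy
      (fun i => (h2 i).1.symm) ?_ ?_ ?_ hfree
    · intro i
      exact ⟨(hprivx (s i) (sD i) (sneb i)).1,
        fun h => hst b₀ hb₀D (s i) (sD i) (Ne.symm (sneb i)) h,
        (hprivy (s i) (sD i) (sneb i)).1,
        (hprivx (s i) (sD i) (sneb i)).2,
        Ne.symm (sneb i),
        (hprivy (s i) (sD i) (sneb i)).2⟩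
    · intro i
      exact ⟨hCind x (c i) hx2 (h1 i).1 (hxneI (c i) (h1 i)),
        fun h => (hInadjb (c i) (h1 i)).1 h.symm,
        hCind y (c i) hy2 (h1 i).1 (hyneI (c i) (h1 i)),
        hxneI (c i) (h1 i),
        fun h => (hInadjb (c i) (h1 i)).2 h.symm,
        hyneI (c i) (h1 i)⟩
    · intro i j hij
      have hsne : s i ≠ s j := by
        intro h
        exact h4 i j hij (h ▸ (h2 j))
      have hcne : c i ≠ c j := fun h => hij (h3 h)
      refine ⟨hst (s i) (sD i) (s j) (sD j) hsne,
        hCind (c i) (c j) (h1 i).1 (h1 j).1 hcne,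
        fun h => h4 i j hij ⟨h.symm, sD i⟩,
        hsne, hcne, fun h => (h1 j).2.1 (h ▸ sD i)⟩
  have hbtr : ∀ c0 ∈ I, ∀ c1 ∈ I, c0 ≠ c1 → ∀ s0, s0 ∈ t c0 → s0 ∈ t c1 →
      ¬ SDSx t I ((n+1)-1) (t c0 ∪ t c1) s0 := by
    simp only [Nat.add_sub_cancel]
    rintro c0 hc0 c1 hc1 hne01 s0 hs00 hs01 ⟨c, s, h1, h2, h3, h4, h5, h6⟩
    have s0D : s0 ∈ D := hs00.2
    have s0neb : s0 ≠ b₀ := hsneb c0 hc0 s0 hs00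
    have sD : ∀ i, s i ∈ D := fun i => (h2 i).2
    have sneb : ∀ i, s i ≠ b₀ := fun i => hsneb (c i) (h1 i) (s i) (h2 i)
    have hc0x : x ≠ c0 := hxneI c0 hc0
    have hc1x : x ≠ c1 := hxneI c1 hc1
    have hcjne0 : ∀ j, c0 ≠ c j := fun j h => h6 j (h ▸ hs00)
    have hcjne1 : ∀ j, c1 ≠ c j := fun j h => h6 j (h ▸ hs01)
    refine config c0 s0 c1 (Fin.cons b₀ s) (Fin.cons x c)
      hs00.1 (hs01.1.symm) (hCind c0 c1 hc0.1 hc1.1 hne01) hne01 ?_ ?_ ?_ ?_ hfree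
    · intro i
      refine Fin.cases ?_ (fun j => ?_) i <;> simp only [Fin.cons_zero, Fin.cons_succ]
      · exact hxb.symm
      · exact (h2 j).1.symm
    · intro i
      refine Fin.cases ?_ (fun j => ?_) i <;> simp only [Fin.cons_zero, Fin.cons_succ]
      · exact ⟨(hInadjb c0 hc0).1,
          fun h => hst s0 s0D b₀ hb₀D s0neb h,
          (hInadjb c1 hc1).1,
          (hInadjb c0 hc0).2, s0neb.symm ∘ Eq.symm, (hInadjb c1 hc1).2⟩
      · have hs0sj : s0 ≠ s j := fun h => h5 j (Or.inl (h ▸ hs00))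
        exact ⟨fun h => h5 j (Or.inl ⟨h, sD j⟩),
          fun h => hst s0 s0D (s j) (sD j) hs0sj h,
          fun h => h5 j (Or.inr ⟨h, sD j⟩),
          fun h => hc0.2.1 (h ▸ sD j),
          hs0sj,
          fun h => hc1.2.1 (h ▸ sD j)⟩
    · intro i
      refine Fin.cases ?_ (fun j => ?_) i <;> simp only [Fin.cons_zero, Fin.cons_succ]
      · exact ⟨fun h => hCind x c0 hx2 hc0.1 hc0x h.symm,
          fun h => (hprivx s0 s0D s0neb).1 h.symm,
          fun h => hCind x c1 hx2 hc1.1 hc1x h.symm,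
          Ne.symm hc0x,
          fun h => (hprivx s0 s0D s0neb).2 h.symm,
          Ne.symm hc1x⟩
      · exact ⟨hCind c0 (c j) hc0.1 (h1 j).1 (hcjne0 j),
          fun h => h6 j ⟨h.symm, s0D⟩,
          hCind c1 (c j) hc1.1 (h1 j).1 (hcjne1 j),
          hcjne0 j,
          fun h => (h1 j).2.1 (h ▸ s0D),
          hcjne1 j⟩
    · intro i j
      refine Fin.cases ?_ (fun i' => ?_) i <;> refine Fin.cases ?_ (fun j' => ?_) j <;>
        simp only [Fin.cons_zero, Fin.cons_succ] <;> intro hij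
      · exact absurd rfl hij
      · exact ⟨fun h => hst b₀ hb₀D (s j') (sD j') (Ne.symm (sneb j')) h,
          hCind x (c j') hx2 (h1 j').1 (hxneI (c j') (h1 j')),
          fun h => (hInadjb (c j') (h1 j')).1 h.symm,
          Ne.symm (sneb j'),
          hxneI (c j') (h1 j'),
          fun h => (hInadjb (c j') (h1 j')).2 h.symm⟩
      · exact ⟨fun h => hst b₀ hb₀D (s i') (sD i') (Ne.symm (sneb i')) h.symm,
          fun h => hCind x (c i') hx2 (h1 i').1 (hxneI (c i') (h1 i')) h.symm,
          fun h => (hprivx (s i') (sD i') (sneb i')).1 h.symm,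
          sneb i',
          fun h => hxneI (c i') (h1 i') h.symm,
          fun h => (hprivx (s i') (sD i') (sneb i')).2 h.symm⟩
      · have hij' : i' ≠ j' := fun h => hij (congrArg Fin.succ h)
        have hsne : s i' ≠ s j' := fun h => h4 i' j' hij' (h ▸ (h2 j'))
        have hcne : c i' ≠ c j' := fun h => hij' (h3 h)
        exact ⟨hst (s i') (sD i') (s j') (sD j') hsne,
          hCind (c i') (c j') (h1 i').1 (h1 j').1 hcne,
          fun h => h4 i' j' hij' ⟨h.symm, sD i'⟩,
          hsne, hcne, fun h => (h1 j').2.1 (h ▸ sD i')⟩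
  obtain ⟨Y, hYcard, hYcov⟩ := traceLemma (n+1) t I hnetr hatr hbtr
  -- the replacement dominating set
  set S1 : Set V := (B ∩ D) \ {b₀} with hS1
  set D2 : Set V := (D \ S1) ∪ A ∪ Y with hD2
  have hAD2 : A ⊆ D2 := fun a ha => Or.inl (Or.inr ha)
  have hdom2 : IsDomSet G D2 := by
    intro v hv
    by_contra hnone
    push_neg at hnone
    have hvA : v ∉ A := fun h => hv (hAD2 h)
    have hnoA : ∀ a ∈ A, ¬ G.Adj v a := fun a ha hadj =>
      hnone a (hAD2 ha) hadj.symm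
    have hvD : v ∉ D := by
      intro hvD
      have hvS1 : v ∈ S1 := by
        by_contra h
        exact hv (Or.inl (Or.inl ⟨hvD, h⟩))
      have hvB : distToSet G v A = 1 := by
        have := hvS1.1.1; rw [hB] at this; exact this
      obtain ⟨a, ha, hadj⟩ := hadj1 v hvB
      exact hnoA a ha hadj
    obtain ⟨u, huD, huv⟩ := hD.1 v hvD
    have huS1 : u ∈ S1 := by
      by_contra h
      exact hnone u (Or.inl (Or.inl ⟨huD, h⟩)) huv
    have huB : distToSet G u A = 1 := by
      have := huS1.1.1; rw [hB] at this; exact this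
    obtain ⟨a, ha, hua⟩ := hadj1 u huB
    have hvI : v ∈ I := by
      refine ⟨hmk2 v u a hvA hnoA huv.symm hua ha, hvD, ?_⟩
      intro s hadj hsD h
      subst h
      have : s ∈ D \ S1 := ⟨hsD, fun hs => hs.2 rfl⟩
      exact hnone s (Or.inl (Or.inl this)) hadj.symm
    obtain ⟨w, hwt, hwY⟩ := hYcov v hvI
    exact hnone w (Or.inr hwY) hwt.1.symm
  -- cardinality computations
  have hS1D : S1 ⊆ D := fun v hv => hv.1.2
  have hcard1 : S1.ncard + 1 = (B ∩ D).ncard :=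
    Set.ncard_diff_singleton_add_one hb₀ (B ∩ D).toFinite
  have hcard2 : D2.ncard ≤ (D.ncard - S1.ncard) + A.ncard + Y.ncard := by
    calc D2.ncard ≤ ((D \ S1) ∪ A).ncard + Y.ncard := Set.ncard_union_le _ _
      _ ≤ (D \ S1).ncard + A.ncard + Y.ncard := by
          have := Set.ncard_union_le (D \ S1) A
          omega
      _ = (D.ncard - S1.ncard) + A.ncard + Y.ncard := by
          rw [Set.ncard_diff hS1D]
  have hminle : D.ncard ≤ D2.ncard := hD.2 D2 hdom2
  have hstrict : D.ncard + 1 ≤ D2.ncard := by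
    rcases Nat.lt_or_ge D.ncard D2.ncard with h | h
    · omega
    · exfalso
      have heq : D2.ncard = D.ncard := le_antisymm h hminle
      have hmin2 : IsMinDomSet G D2 := ⟨hdom2, fun D' hD' => heq ▸ hD.2 D' hD'⟩
      have hstab2 := hstable D2 hmin2
      have ha0 : f (Sum.inl 0) ∈ A := by rw [← hfA]; exact Set.mem_range_self _
      have ha1 : f (Sum.inl 1) ∈ A := by rw [← hfA]; exact Set.mem_range_self _
      have hadj01 : G.Adj (f (Sum.inl 0)) (f (Sum.inl 1)) := by
        rw [f.map_adj_iff, P3kP2_adj_ll]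
        refine ⟨by decide, Or.inl (by decide)⟩
      have hne01 : f (Sum.inl 0) ≠ f (Sum.inl 1) := fun h => by
        have := f.injective h
        simp at this
      exact hstab2 (hAD2 ha0) (hAD2 ha1) hne01 hadj01
  have hS1card : S1.ncard ≤ D.ncard := Set.ncard_le_ncard hS1D D.toFinite
  have hAcard : A.ncard = 2 * n + 3 := by
    rw [← hfA]
    have h2 : (Set.range ⇑f).ncard = Nat.card (Fin 3 ⊕ Fin n × Fin 2) := by
      rw [← Nat.card_coe_set_eq]
      exact Nat.card_range_of_injective f.injective
    rw [h2]
    simp [Nat.card_eq_fintype_card]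
    omega
  have hfinal : S1.ncard + 1 ≤ A.ncard + Y.ncard := by omega
  have hgb := gb_ineq n
  have : (B ∩ D).ncard ≤ (2*n+3) + gbound (n+1) := by omega
  calc (B ∩ D).ncard ≤ (2*n+3) + gbound (n+1) := this
    _ ≤ (n+1) * (2*n+3) := by omega
    _ = (n+1) * A.ncard := by rw [hAcard]
end
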